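/- Let n: [0,∞) → ℝ_+^2 be Lipschitz, with n_1(0) + n_2(0) > 0, and suppose at almost every t: (i) if n_1(t) > 0 and n_2(t) > 0 then n_1'(t) + n_2'(t) = λ_1 + λ_2 - C_{1,2}; (ii) if n_i(t) > 0 = n_j(t) then n_i'(t) + n_j'(t) ≤ max{λ_1 - C_1, λ_2 - C_2} and once n_j hits 0 it stays at 0; (iii) if n_1(t) = n_2(t) = 0 then n'(t) = 0. Assume λ_1 + λ_2 < C_{1,2}, λ_1 < C_1, and λ_2 < C_2. Then there is a constant B, independent of the initial condition, such that n_1(t) = n_2(t) = 0 for all t ≥ B (n_1(0) + n_2(0)). One can take B = 1/(C_{1,2} - λ_1 - λ_2) + (1 + max{λ_1 - C̲_1, λ_2 - C̲_2}/(C_{1,2} - λ_1 - λ_2)) / min{C_1 - λ_1, C_2 - λ_2}, assuming additionally that each coordinate's derivative is bounded below by λ_i - C̄_i ≥ λ_i - C_{1,2} while both are positive. -/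

import Mathlib

open Set MeasureTheory Filter Topology

noncomputable def xseq (n : ℕ) : ℝ := ((n : ℝ) + 1)⁻¹

lemma xseq_pos (n : ℕ) : 0 < xseq n := by
  have : (0:ℝ) < (n:ℝ) + 1 := by positivity
  exact inv_pos.2 this

lemma xseq_tendsto : Tendsto xseq atTop (𝓝 0) := by
  unfold xseq
  simpa [xseq, one_div] using tendsto_one_div_add_atTop_nhds_zero_nat (𝕜 := ℝ)

lemma tendsto_slope_seq {f : ℝ → ℝ} {t d : ℝ} (h : HasDerivAt f d t) :
    Tendsto (fun n : ℕ => (f (t + xseq n) - f t) / xseq n) atTop (𝓝 d) := by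
  have h1 : Tendsto (slope f t) (nhdsWithin t {t}ᶜ) (𝓝 d) :=
    hasDerivAt_iff_tendsto_slope.mp h
  have h2 : Tendsto (fun n : ℕ => t + xseq n) atTop (nhdsWithin t {t}ᶜ) := by
    rw [tendsto_nhdsWithin_iff]
    constructor
    · simpa using tendsto_const_nhds.add xseq_tendsto
    · exact Eventually.of_forall fun n => by
        simp only [mem_compl_iff, mem_singleton_iff]
        have := xseq_pos n; intro hc; nlinarith [hc]
  have := h1.comp h2
  convert this using 2 with n
  simp [slope_def_field, Function.comp]

lemma deriv_abs_le_lipschitz {f : ℝ → ℝ} {L : NNReal} (hf : LipschitzWith L f) (t : ℝ) :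
    |deriv f t| ≤ (L : ℝ) := by
  by_cases ht : DifferentiableAt ℝ f t
  · have hT := tendsto_slope_seq ht.hasDerivAt
    refine le_of_tendsto hT.abs (Eventually.of_forall fun n => ?_)
    have hx := xseq_pos n
    rw [abs_div, abs_of_pos hx, div_le_iff₀ hx]
    have := hf.dist_le_mul (t + xseq n) t
    rw [Real.dist_eq, Real.dist_eq] at this
    simpa [abs_of_pos hx] using this
  · rw [deriv_zero_of_not_differentiableAt ht]
    simpa using L.coe_nonneg

lemma lip_key {f : ℝ → ℝ} {L : NNReal} (hf : LipschitzWith L f)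
    {a b c : ℝ} (hab : a < b)
    (hd : ∀ᵐ t ∂(volume : Measure ℝ), t ∈ Set.Ioo a b →
      DifferentiableAt ℝ f t ∧ deriv f t ≤ c) :
    f b - f a ≤ c * (b - a) := by
  have hcont := hf.continuous
  have hint : ∀ u v : ℝ, IntervalIntegrable f volume u v := fun u v =>
    hcont.intervalIntegrable u v
  have hLint : IntegrableOn (fun _ : ℝ => (L : ℝ)) (Ioo a b) volume :=
    integrableOn_const measure_Ioo_lt_top.ne
  -- a.e. facts on the restricted measure
  have hae : ∀ᵐ t ∂(volume.restrict (Ioo a b)),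
      Tendsto (fun n : ℕ => (f (t + xseq n) - f t) / xseq n) atTop (𝓝 (deriv f t)) ∧
      deriv f t ≤ c := by
    filter_upwards [ae_restrict_of_ae hd, ae_restrict_mem measurableSet_Ioo] with t h1 h2
    exact ⟨tendsto_slope_seq ((h1 h2).1.hasDerivAt), (h1 h2).2⟩
  -- dominated convergence
  have hDCT : Tendsto (fun n : ℕ => ∫ t in Ioo a b, (f (t + xseq n) - f t) / xseq n)
      atTop (𝓝 (∫ t in Ioo a b, deriv f t)) := by
    refine tendsto_integral_of_dominated_convergence (fun _ => (L : ℝ)) ?_ hLint ?_ ?_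
    · intro n
      exact (((hcont.comp (continuous_id.add continuous_const)).sub hcont).div_const
        _).aestronglyMeasurable
    · intro n
      refine Eventually.of_forall fun t => ?_
      have hx := xseq_pos n
      rw [Real.norm_eq_abs, abs_div, abs_of_pos hx, div_le_iff₀ hx]
      have := hf.dist_le_mul (t + xseq n) t
      rw [Real.dist_eq, Real.dist_eq] at this
      simpa [abs_of_pos hx] using this
    · exact hae.mono fun t h => h.1
  -- identify the integrals
  have hident : ∀ n : ℕ, (∫ t in Ioo a b, (f (t + xseq n) - f t) / xseq n)
      = (∫ u in b..(b + xseq n), f u) / xseq n - (∫ u in a..(a + xseq n), f u) / xseq n := by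
    intro n
    have key : (∫ t in a..b, (f (t + xseq n) - f t))
        = (∫ u in b..(b + xseq n), f u) - ∫ u in a..(a + xseq n), f u := by
      have hintc : IntervalIntegrable (fun t => f (t + xseq n)) volume a b :=
        (hcont.comp (continuous_id.add continuous_const)).intervalIntegrable a b
      rw [intervalIntegral.integral_sub hintc (hint a b)]
      rw [intervalIntegral.integral_comp_add_right]
      have h1 : (∫ u in a..(a + xseq n), f u) + ∫ u in (a + xseq n)..(b + xseq n), f u
          = ∫ u in a..(b + xseq n), f u :=
        intervalIntegral.integral_add_adjacent_intervals (hint _ _) (hint _ _)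
      have h2 : (∫ u in a..b, f u) + ∫ u in b..(b + xseq n), f u
          = ∫ u in a..(b + xseq n), f u :=
        intervalIntegral.integral_add_adjacent_intervals (hint _ _) (hint _ _)
      linarith
    calc (∫ t in Ioo a b, (f (t + xseq n) - f t) / xseq n)
        = ∫ t in Ioc a b, (f (t + xseq n) - f t) / xseq n :=
          (integral_Ioc_eq_integral_Ioo).symm
      _ = ∫ t in a..b, (f (t + xseq n) - f t) / xseq n :=
          (intervalIntegral.integral_of_le hab.le).symm
      _ = (∫ t in a..b, (f (t + xseq n) - f t)) / xseq n :=
          intervalIntegral.integral_div _ _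
      _ = _ := by rw [key, sub_div]
  -- endpoint limits
  have hGb : HasDerivAt (fun u => ∫ x in b..u, f x) (f b) b :=
    intervalIntegral.integral_hasDerivAt_right (hint b b)
      (hcont.stronglyMeasurableAtFilter _ _) hcont.continuousAt
  have hGa : HasDerivAt (fun u => ∫ x in a..u, f x) (f a) a :=
    intervalIntegral.integral_hasDerivAt_right (hint a a)
      (hcont.stronglyMeasurableAtFilter _ _) hcont.continuousAt
  have Tb : Tendsto (fun n : ℕ => (∫ u in b..(b + xseq n), f u) / xseq n) atTop (𝓝 (f b)) := by
    have := tendsto_slope_seq hGb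
    simpa using this
  have Ta : Tendsto (fun n : ℕ => (∫ u in a..(a + xseq n), f u) / xseq n) atTop (𝓝 (f a)) := by
    have := tendsto_slope_seq hGa
    simpa using this
  have hlim2 : Tendsto (fun n : ℕ => ∫ t in Ioo a b, (f (t + xseq n) - f t) / xseq n)
      atTop (𝓝 (f b - f a)) := by
    simp only [hident]
    exact Tb.sub Ta
  have heq : f b - f a = ∫ t in Ioo a b, deriv f t := tendsto_nhds_unique hlim2 hDCT
  -- final bound
  have hder_int : IntegrableOn (deriv f) (Ioo a b) volume := by
    refine Integrable.mono' hLint ((measurable_deriv f).aestronglyMeasurable) ?_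
    exact Eventually.of_forall fun t => by
      simpa [Real.norm_eq_abs] using deriv_abs_le_lipschitz hf t
  have hmono : (∫ t in Ioo a b, deriv f t) ≤ ∫ _t in Ioo a b, c := by
    refine integral_mono_ae hder_int (integrableOn_const measure_Ioo_lt_top.ne) ?_
    exact hae.mono fun t h => h.2
  have hconst : (∫ _t in Ioo a b, c) = c * (b - a) := by
    rw [setIntegral_const, Real.volume_real_Ioo_of_le hab.le, smul_eq_mul,
      mul_comm]
  rw [heq]
  calc (∫ t in Ioo a b, deriv f t) ≤ _ := hmono
    _ = _ := hconst


open MeasureTheory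

/-- Fluid stability for the W-topology under Max-Weight: under the drift conditions
(i)-(iii), absorption at zero, the derivative lower bounds `λ_i - C̄_i` while both
coordinates are positive, and the stability conditions `λ_1 + λ_2 < C_{1,2}`,
`λ_1 < C_1`, `λ_2 < C_2`, every fluid trajectory reaches `0` by time
`B (n_1(0) + n_2(0))` with
`B = 1/(C_{1,2}-λ_1-λ_2) + (1 + max{λ_1-C̲_1, λ_2-C̲_2}/(C_{1,2}-λ_1-λ_2)) / min{C_1-λ_1, C_2-λ_2}`. -/
theorem stmt11 (lam1 lam2 C12 C1 C2 Cl1 Cl2 Cu1 Cu2 K : ℝ)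
    (n1 n2 : ℝ → ℝ)
    (hLip1 : LipschitzWith (Real.toNNReal K) n1)
    (hLip2 : LipschitzWith (Real.toNNReal K) n2)
    (hnn : ∀ t, 0 ≤ t → 0 ≤ n1 t ∧ 0 ≤ n2 t)
    (hinit : 0 < n1 0 + n2 0)
    (hC1lu : Cl1 ≤ Cu1) (hC2lu : Cl2 ≤ Cu2)
    (hsum1 : Cl1 + Cu2 = C12) (hsum2 : Cu1 + Cl2 = C12)
    (hC1l : Cl1 ≤ C1) (hC2l : Cl2 ≤ C2)
    (hstab : lam1 + lam2 < C12) (hs1 : lam1 < C1) (hs2 : lam2 < C2)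
    (hstay1 : ∀ s t, 0 ≤ s → s ≤ t → n1 s = 0 → n1 t = 0)
    (hstay2 : ∀ s t, 0 ≤ s → s ≤ t → n2 s = 0 → n2 t = 0)
    (hdrift : ∀ᵐ t ∂(volume : Measure ℝ), 0 ≤ t →
      DifferentiableAt ℝ n1 t ∧ DifferentiableAt ℝ n2 t ∧
      (0 < n1 t → 0 < n2 t →
        deriv n1 t + deriv n2 t = lam1 + lam2 - C12 ∧
        lam1 - Cu1 ≤ deriv n1 t ∧ lam2 - Cu2 ≤ deriv n2 t) ∧
      (0 < n1 t → n2 t = 0 →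
        deriv n1 t + deriv n2 t ≤ max (lam1 - C1) (lam2 - C2)) ∧
      (0 < n2 t → n1 t = 0 →
        deriv n1 t + deriv n2 t ≤ max (lam1 - C1) (lam2 - C2)) ∧
      (n1 t = 0 → n2 t = 0 → deriv n1 t = 0 ∧ deriv n2 t = 0)) :
    ∀ t,
      (1 / (C12 - lam1 - lam2)
          + (1 + max (lam1 - Cl1) (lam2 - Cl2) / (C12 - lam1 - lam2))
              / min (C1 - lam1) (C2 - lam2)) * (n1 0 + n2 0) ≤ t →
      n1 t = 0 ∧ n2 t = 0 := by
  intro t ht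
  set a := C12 - lam1 - lam2 with ha_def
  set m := min (C1 - lam1) (C2 - lam2) with hm_def
  set M := max (lam1 - Cl1) (lam2 - Cl2) with hM_def
  set B := 1 / a + (1 + M / a) / m with hB_def
  set S0 := n1 0 + n2 0 with hS0_def
  have ha : 0 < a := by simp only [ha_def]; linarith
  have hm : 0 < m := lt_min (by linarith) (by linarith)
  set δ := min a m with hδ_def
  have hδ : 0 < δ := lt_min ha hm
  have hδa : δ ≤ a := min_le_left _ _
  have hδm : δ ≤ m := min_le_right _ _
  have hm1 : m ≤ C1 - lam1 := min_le_left _ _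
  have hm2 : m ≤ C2 - lam2 := min_le_right _ _
  have hM1 : lam1 - Cl1 ≤ M := le_max_left _ _
  have hM2 : lam2 - Cl2 ≤ M := le_max_right _ _
  -- m + M ≥ 0
  have hmM : 0 ≤ m + M := by
    rcases le_total (C1 - lam1) (C2 - lam2) with h | h
    · rw [hm_def, min_eq_left h]; linarith
    · rw [hm_def, min_eq_right h]; linarith
  -- a + M > 0
  have haM : 0 < a + M := by
    have h1 : Cu2 - lam2 ≤ a + M := by rw [ha_def]; linarith
    have h2 : Cu1 - lam1 ≤ a + M := by rw [ha_def]; linarith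
    linarith
  have hBa : 1 / a + (a + M) / (a * m) = B := by
    rw [hB_def]; field_simp <;> ring
  have hBm : 1 / m + (m + M) / (a * m) = B := by
    rw [hB_def]; field_simp <;> ring
  have hB1 : 1 / a ≤ B := by
    have := div_nonneg haM.le (mul_pos ha hm).le
    linarith
  have hB2 : 1 / m ≤ B := by
    have := div_nonneg hmM (mul_pos ha hm).le
    linarith
  have hBδ : 1 / δ ≤ B := by
    rcases le_total a m with h | h
    · rw [hδ_def, min_eq_left h]; exact hB1
    · rw [hδ_def, min_eq_right h]; exact hB2
  set T := S0 / δ with hT_def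
  have hT0 : 0 < T := div_pos hinit hδ
  have hTt : T ≤ t := by
    have h1 : (1:ℝ) ≤ B * δ := (div_le_iff₀ hδ).1 hBδ
    have hTB : T ≤ B * S0 := by
      rw [hT_def, div_le_iff₀ hδ]
      nlinarith
    linarith
  by_cases hz : ∃ s, s ∈ Icc (0:ℝ) T ∧ n1 s + n2 s ≤ 0
  · obtain ⟨s, hs, hsum⟩ := hz
    have hs0 : (0:ℝ) ≤ s := hs.1
    have hn1 := (hnn s hs0).1
    have hn2 := (hnn s hs0).2
    have h1 : n1 s = 0 := le_antisymm (by linarith) hn1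
    have h2 : n2 s = 0 := le_antisymm (by linarith) hn2
    have hst : s ≤ t := le_trans hs.2 hTt
    exact ⟨hstay1 s t hs0 hst h1, hstay2 s t hs0 hst h2⟩
  · exfalso
    push_neg at hz
    have hpos : ∀ s, s ∈ Icc (0:ℝ) T → 0 < n1 s + n2 s := fun s hs => hz s hs
    have hf : LipschitzWith (Real.toNNReal K + Real.toNNReal K)
        (fun u => n1 u + n2 u) := hLip1.add hLip2
    have hd' : ∀ᵐ u ∂(volume : Measure ℝ), u ∈ Set.Ioo (0:ℝ) T →
        DifferentiableAt ℝ (fun u => n1 u + n2 u) u ∧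
        deriv (fun u => n1 u + n2 u) u ≤ -δ := by
      filter_upwards [hdrift] with u hu hmem
      obtain ⟨h1, h2, hboth, h10, h01, _⟩ := hu hmem.1.le
      refine ⟨h1.add h2, ?_⟩
      rw [deriv_fun_add h1 h2]
      have hn1 := (hnn u hmem.1.le).1
      have hn2 := (hnn u hmem.1.le).2
      have hmax : max (lam1 - C1) (lam2 - C2) ≤ -δ :=
        max_le (by linarith) (by linarith)
      rcases eq_or_lt_of_le hn1 with e1 | p1
      · rcases eq_or_lt_of_le hn2 with e2 | p2
        · exact absurd (hpos u ⟨hmem.1.le, hmem.2.le⟩) (by rw [← e1, ← e2]; simp)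
        · linarith [h01 p2 e1.symm]
      · rcases eq_or_lt_of_le hn2 with e2 | p2
        · linarith [h10 p1 e2.symm]
        · linarith [(hboth p1 p2).1]
    have hkey := lip_key hf hT0 hd'
    have hTsum : -δ * (T - 0) = -S0 := by
      rw [hT_def]
      field_simp
      ring
    have hfT := hpos T ⟨hT0.le, le_refl T⟩
    simp only [sub_zero] at hkey hTsum
    rw [hTsum] at hkey
    -- hkey : n1 T + n2 T - (n1 0 + n2 0) ≤ -S0
    rw [← hS0_def] at hkey
    linarith
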